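/- Under the mixture model with coordinate-wise independent sources, for any two observation indices l ≠ n, the variance of the normalized correlation satisfies Var[(1/D) Σ_{k=1}^D a_l(k) a_n(k)] = (1/D²) Σ_{k=1}^D Σ_{i=1}^J Σ_{j=1}^J p_i(l) p_j(n) E[h_i(k)² h_j(k)²] − (1/D) (Σ_{j=1}^J p_j(l) p_j(n))². -/

import Mathlib

open MeasureTheory ProbabilityTheory

/-- Integral of a finset product of mutually independent real random variables. -/
lemma integral_finset_prod_of_iIndepFun {Ω ι : Type*} [MeasurableSpace Ω] {μ : Measure Ω}
    [IsProbabilityMeasure μ] {f : ι → Ω → ℝ}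
    (hm : ∀ i, Measurable (f i))
    (hindep : iIndepFun f μ) (s : Finset ι) :
    integral μ (∏ i ∈ s, f i) = ∏ i ∈ s, integral μ (f i) := by
  classical
  induction s using Finset.induction_on with
  | empty => simp [Pi.one_def]
  | @insert a s ha ih =>
    have hprod : Measurable (∏ j ∈ s, f j) := by
      have e : (∏ j ∈ s, f j) = fun a => ∏ j ∈ s, f j a := by funext a; simp
      rw [e]; exact s.measurable_prod (fun i _ => hm i)
    have hind : IndepFun (f a) (∏ j ∈ s, f j) μ :=
      (hindep.indepFun_finsetProd_of_notMem hm ha).symm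
    rw [Finset.prod_insert ha, Finset.prod_insert ha,
      hind.integral_mul_eq_mul_integral (hm a).aestronglyMeasurable hprod.aestronglyMeasurable, ih]

set_option maxHeartbeats 2000000

/-- Variance of the normalized correlation for `l ≠ n`. -/
theorem variance_normalized_correlation
    {Ω : Type*} [MeasurableSpace Ω] (μ : Measure Ω) [IsProbabilityMeasure μ]
    (J L D : ℕ) (hJ : 0 < J) (hL : 0 < L) (hD : 0 < D)
    -- hidden sources
    (h : Fin J → Fin D → Ω → ℝ)
    (hmeas : ∀ j k, Measurable (h j k))
    -- all moments of the sources are finite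
    (hmom : ∀ j k (n : ℕ), Integrable (fun ω => |h j k ω| ^ n) μ)
    -- second-moment structure: E[h_i(k) h_j(k')] = δ_{ij} δ_{kk'}
    (hcorr : ∀ (i j : Fin J) (k k' : Fin D),
      ∫ ω, h i k ω * h j k' ω ∂μ = if i = j ∧ k = k' then 1 else 0)
    -- indicators
    (I : Fin J → Fin L → Fin D → Ω → ℝ)
    (hImeas : ∀ j l k, Measurable (I j l k))
    (hI01 : ∀ j l k ω, I j l k ω = 0 ∨ I j l k ω = 1)
    (hIsum : ∀ l k ω, ∑ j, I j l k ω = 1)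
    -- probabilities
    (p : Fin J → Fin L → ℝ)
    (hp0 : ∀ j l, 0 ≤ p j l) (hp1 : ∀ l, ∑ j, p j l = 1)
    (hEI : ∀ j l k, ∫ ω, I j l k ω ∂μ = p j l)
    -- the indicator families associated with distinct pairs (l,k) are mutually independent
    (hIndepI : iIndepFun
      (fun (lk : Fin L × Fin D) ω => fun j => I j lk.1 lk.2 ω) μ)
    -- the collection of all indicators is independent of the collection of all sources
    (hIndepIh : IndepFun
      (fun ω => fun jlk : Fin J × Fin L × Fin D => I jlk.1 jlk.2.1 jlk.2.2 ω)
      (fun ω => fun jk : Fin J × Fin D => h jk.1 jk.2 ω) μ)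
    -- observations
    (a : Fin L → Fin D → Ω → ℝ)
    (ha : ∀ l k ω, a l k ω = ∑ j, I j l k ω * h j k ω)
    -- coordinate-wise independence of the sources
    (hIndeph : iIndepFun
      (fun (k : Fin D) ω => fun j => h j k ω) μ) :
    ∀ l n : Fin L, l ≠ n →
      variance (fun ω => (1 / (D : ℝ)) * ∑ k, a l k ω * a n k ω) μ =
        (1 / (D : ℝ) ^ 2) *
            (∑ k, ∑ i, ∑ j, p i l * p j n * ∫ ω, (h i k ω) ^ 2 * (h j k ω) ^ 2 ∂μ)
          - (1 / (D : ℝ)) * (∑ j, p j l * p j n) ^ 2 := by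
  classical
  intro l n hln
  -- basic facts about the indicators
  have hInn : ∀ j l' k ω, 0 ≤ I j l' k ω := by
    intro j l' k ω; rcases hI01 j l' k ω with h0 | h0 <;> simp [h0]
  have hIdem : ∀ (j : Fin J) (l' : Fin L) (k : Fin D) ω,
      I j l' k ω * I j l' k ω = I j l' k ω := by
    intro j l' k ω; rcases hI01 j l' k ω with h0 | h0 <;> simp [h0]
  have hOrtho : ∀ (l' : Fin L) (k : Fin D) ω {i i' : Fin J}, i ≠ i' →
      I i l' k ω * I i' l' k ω = 0 := by
    intro l' k ω i i' hne
    rcases hI01 i l' k ω with h0 | h0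
    · simp [h0]
    rcases hI01 i' l' k ω with h1 | h1
    · simp [h1]
    exfalso
    have hle : ∑ j ∈ ({i, i'} : Finset (Fin J)), I j l' k ω ≤ ∑ j, I j l' k ω :=
      Finset.sum_le_sum_of_subset_of_nonneg (Finset.subset_univ _)
        (fun j _ _ => hInn j l' k ω)
    rw [Finset.sum_pair hne, h0, h1, hIsum l' k ω] at hle
    norm_num at hle
  have hIb2 : ∀ (i j : Fin J) (k : Fin D) ω, |I i l k ω * I j n k ω| ≤ 1 := by
    intro i j k ω
    rcases hI01 i l k ω with h0 | h0 <;> rcases hI01 j n k ω with h1 | h1 <;>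
      simp [h0, h1]
  have hIb4 : ∀ (i j i' j' : Fin J) (k k' : Fin D) ω,
      |(I i l k ω * I j n k ω) * (I i' l k' ω * I j' n k' ω)| ≤ 1 := by
    intro i j i' j' k k' ω
    rw [abs_mul]
    have h1 := hIb2 i j k ω
    have h2 := hIb2 i' j' k' ω
    have h3 := abs_nonneg (I i l k ω * I j n k ω)
    have h4 := abs_nonneg (I i' l k' ω * I j' n k' ω)
    nlinarith
  -- measurability of observations
  have hameas : ∀ (l' : Fin L) (k : Fin D), Measurable (a l' k) := by
    intro l' k
    have e : a l' k = fun ω => ∑ j, I j l' k ω * h j k ω := funext fun ω => ha l' k ω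
    rw [e]
    exact Finset.measurable_sum _ fun j _ => (hImeas j l' k).mul (hmeas j k)
  -- integrability helpers
  have hint2 : ∀ (i j : Fin J) (k k' : Fin D),
      Integrable (fun ω => h i k ω * h j k' ω) μ := by
    intro i j k k'
    refine Integrable.mono' (g := fun ω => (|h i k ω| ^ 2 + |h j k' ω| ^ 2) / 2)
      (((hmom i k 2).add (hmom j k' 2)).div_const 2)
      ((hmeas i k).mul (hmeas j k')).aestronglyMeasurable
      (ae_of_all _ fun ω => ?_)
    rw [Real.norm_eq_abs, abs_mul]
    nlinarith [sq_nonneg (|h i k ω| - |h j k' ω|), abs_nonneg (h i k ω),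
      abs_nonneg (h j k' ω)]
  have hintsq2 : ∀ (i j : Fin J) (k k' : Fin D),
      Integrable (fun ω => h i k ω ^ 2 * h j k' ω ^ 2) μ := by
    intro i j k k'
    refine Integrable.mono' (g := fun ω => (|h i k ω| ^ 4 + |h j k' ω| ^ 4) / 2)
      (((hmom i k 4).add (hmom j k' 4)).div_const 2)
      (((hmeas i k).pow_const 2).mul ((hmeas j k').pow_const 2)).aestronglyMeasurable
      (ae_of_all _ fun ω => ?_)
    rw [Real.norm_eq_abs]
    have e : |h i k ω ^ 2 * h j k' ω ^ 2| = |h i k ω| ^ 2 * |h j k' ω| ^ 2 := by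
      rw [abs_mul, abs_pow, abs_pow]
    rw [e]
    nlinarith [sq_nonneg (|h i k ω| ^ 2 - |h j k' ω| ^ 2), abs_nonneg (h i k ω),
      abs_nonneg (h j k' ω)]
  have hint4 : ∀ (i j i' j' : Fin J) (k k' : Fin D),
      Integrable (fun ω => (h i k ω * h j k ω) * (h i' k' ω * h j' k' ω)) μ := by
    intro i j i' j' k k'
    refine Integrable.mono'
      (g := fun ω => (|h i k ω| ^ 4 + |h j k ω| ^ 4 + |h i' k' ω| ^ 4 + |h j' k' ω| ^ 4) / 4)
      (((((hmom i k 4).add (hmom j k 4)).add (hmom i' k' 4)).add (hmom j' k' 4)).div_const 4)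
      (((hmeas i k).mul (hmeas j k)).mul ((hmeas i' k').mul (hmeas j' k'))).aestronglyMeasurable
      (ae_of_all _ fun ω => ?_)
    rw [Real.norm_eq_abs, abs_mul, abs_mul, abs_mul]
    nlinarith [sq_nonneg (|h i k ω| * |h j k ω| - |h i' k' ω| * |h j' k' ω|),
      sq_nonneg (|h i k ω| ^ 2 - |h j k ω| ^ 2),
      sq_nonneg (|h i' k' ω| ^ 2 - |h j' k' ω| ^ 2),
      abs_nonneg (h i k ω), abs_nonneg (h j k ω), abs_nonneg (h i' k' ω),
      abs_nonneg (h j' k' ω),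
      mul_nonneg (abs_nonneg (h i k ω)) (abs_nonneg (h j k ω)),
      mul_nonneg (abs_nonneg (h i' k' ω)) (abs_nonneg (h j' k' ω))]
  have hbddmul : ∀ (f g : Ω → ℝ), Measurable f → (∀ ω, |f ω| ≤ 1) → Integrable g μ →
      Integrable (fun ω => f ω * g ω) μ := by
    intro f g hf hb hg
    exact hg.bdd_mul hf.aestronglyMeasurable
      (c := 1) (ae_of_all _ fun ω => by simpa [Real.norm_eq_abs] using hb ω)
  -- independence helpers
  have hIvec : Measurable (fun ω => fun q : Fin J × Fin L × Fin D => I q.1 q.2.1 q.2.2 ω) :=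
    measurable_pi_lambda _ fun q => hImeas _ _ _
  have hhvec : Measurable (fun ω => fun q : Fin J × Fin D => h q.1 q.2 ω) :=
    measurable_pi_lambda _ fun q => hmeas _ _
  have hsplit : ∀ (φ : (Fin J × Fin L × Fin D → ℝ) → ℝ) (ψ : (Fin J × Fin D → ℝ) → ℝ),
      Measurable φ → Measurable ψ →
      ∫ ω, φ (fun q => I q.1 q.2.1 q.2.2 ω) * ψ (fun q => h q.1 q.2 ω) ∂μ
        = (∫ ω, φ (fun q => I q.1 q.2.1 q.2.2 ω) ∂μ) * ∫ ω, ψ (fun q => h q.1 q.2 ω) ∂μ := by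
    intro φ ψ hφ hψ
    exact (hIndepIh.comp hφ hψ).integral_mul_eq_mul_integral (hφ.comp hIvec).aestronglyMeasurable
      (hψ.comp hhvec).aestronglyMeasurable
  have hEprod : ∀ (s : Finset (Fin L × Fin D)) (c : Fin L × Fin D → Fin J),
      ∫ ω, ∏ q ∈ s, I (c q) q.1 q.2 ω ∂μ = ∏ q ∈ s, p (c q) q.1 := by
    intro s c
    have hind : iIndepFun (fun q ω => I (c q) q.1 q.2 ω) μ :=
      hIndepI.comp (fun q v => v (c q)) (fun q => measurable_pi_apply _)
    have e : (fun ω => ∏ q ∈ s, I (c q) q.1 q.2 ω)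
        = (∏ q ∈ s, fun ω => I (c q) q.1 q.2 ω) := by
      funext ω; simp
    calc ∫ ω, ∏ q ∈ s, I (c q) q.1 q.2 ω ∂μ
        = integral μ (∏ q ∈ s, fun ω => I (c q) q.1 q.2 ω) := by rw [← e]
      _ = ∏ q ∈ s, ∫ ω, I (c q) q.1 q.2 ω ∂μ :=
          integral_finset_prod_of_iIndepFun (fun q => hImeas _ _ _) hind s
      _ = ∏ q ∈ s, p (c q) q.1 := Finset.prod_congr rfl fun q _ => hEI _ _ _
  have hEII : ∀ (i j : Fin J) (k : Fin D),
      ∫ ω, I i l k ω * I j n k ω ∂μ = p i l * p j n := by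
    intro i j k
    have hne : ((l, k) : Fin L × Fin D) ≠ (n, k) := by simp [Prod.ext_iff, hln]
    have hp := hEprod {(l, k), (n, k)} (fun q => if q.1 = l then i else j)
    simp only [Finset.prod_pair hne] at hp
    have hne2 : n ≠ l := Ne.symm hln
    simpa [hne2] using hp
  have hEII4 : ∀ (i j i' j' : Fin J) (k k' : Fin D), k ≠ k' →
      ∫ ω, (I i l k ω * I j n k ω) * (I i' l k' ω * I j' n k' ω) ∂μ
        = (p i l * p j n) * (p i' l * p j' n) := by
    intro i j i' j' k k' hkk'
    set c : Fin L × Fin D → Fin J := fun q =>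
      if q = (l, k) then i else if q = (n, k) then j else if q = (l, k') then i' else j'
      with hc
    have h1 : ((l, k) : Fin L × Fin D) ∉ ({(n, k), (l, k'), (n, k')} : Finset _) := by
      simp [Prod.ext_iff, hln, hkk']
    have h2 : ((n, k) : Fin L × Fin D) ∉ ({(l, k'), (n, k')} : Finset _) := by
      simp [Prod.ext_iff, Ne.symm hln, hkk']
    have h3 : ((l, k') : Fin L × Fin D) ≠ (n, k') := by simp [Prod.ext_iff, hln]
    have hc1 : c (l, k) = i := by simp [hc]
    have hc2 : c (n, k) = j := by simp [hc, Prod.ext_iff, Ne.symm hln]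
    have hc3 : c (l, k') = i' := by simp [hc, Prod.ext_iff, Ne.symm hkk']
    have hc4 : c (n, k') = j' := by simp [hc, Prod.ext_iff, Ne.symm hln, Ne.symm hkk']
    have hp := hEprod {(l, k), (n, k), (l, k'), (n, k')} c
    simp only [Finset.prod_insert h1, Finset.prod_insert h2, Finset.prod_pair h3,
      hc1, hc2, hc3, hc4] at hp
    have e : (fun ω => (I i l k ω * I j n k ω) * (I i' l k' ω * I j' n k' ω))
        = fun ω => I i l k ω * (I j n k ω * (I i' l k' ω * I j' n k' ω)) := by
      funext ω; ring
    rw [e, hp]; ring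
  have hEh2 : ∀ (i j : Fin J) (k : Fin D),
      ∫ ω, h i k ω * h j k ω ∂μ = if i = j then 1 else 0 := by
    intro i j k; simpa using hcorr i j k k
  have hEh4 : ∀ (i j i' j' : Fin J) (k k' : Fin D), k ≠ k' →
      ∫ ω, (h i k ω * h j k ω) * (h i' k' ω * h j' k' ω) ∂μ
        = (if i = j then 1 else 0) * (if i' = j' then 1 else 0) := by
    intro i j i' j' k k' hkk'
    have hind : IndepFun (fun ω => h i k ω * h j k ω) (fun ω => h i' k' ω * h j' k' ω) μ :=
      (hIndeph.indepFun hkk').comp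
        ((measurable_pi_apply i).mul (measurable_pi_apply j))
        ((measurable_pi_apply i').mul (measurable_pi_apply j'))
    have := hind.integral_mul_eq_mul_integral ((hmeas i k).mul (hmeas j k)).aestronglyMeasurable
      ((hmeas i' k').mul (hmeas j' k')).aestronglyMeasurable
    rw [← hEh2 i j k, ← hEh2 i' j' k']
    exact this
  have hEterm1 : ∀ (i j : Fin J) (k : Fin D),
      ∫ ω, (I i l k ω * I j n k ω) * (h i k ω * h j k ω) ∂μ
        = (p i l * p j n) * (if i = j then 1 else 0) := by
    intro i j k
    have hs : ∫ ω, (I i l k ω * I j n k ω) * (h i k ω * h j k ω) ∂μ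
        = (∫ ω, I i l k ω * I j n k ω ∂μ) * ∫ ω, h i k ω * h j k ω ∂μ :=
      hsplit (fun v => v (i, l, k) * v (j, n, k)) (fun v => v (i, k) * v (j, k))
        ((measurable_pi_apply _).mul (measurable_pi_apply _))
        ((measurable_pi_apply _).mul (measurable_pi_apply _))
    rw [hs, hEII i j k, hEh2 i j k]
  have hEterm2 : ∀ (i j : Fin J) (k : Fin D),
      ∫ ω, (I i l k ω * I j n k ω) * (h i k ω ^ 2 * h j k ω ^ 2) ∂μ
        = (p i l * p j n) * ∫ ω, h i k ω ^ 2 * h j k ω ^ 2 ∂μ := by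
    intro i j k
    have hs : ∫ ω, (I i l k ω * I j n k ω) * (h i k ω ^ 2 * h j k ω ^ 2) ∂μ
        = (∫ ω, I i l k ω * I j n k ω ∂μ) * ∫ ω, h i k ω ^ 2 * h j k ω ^ 2 ∂μ :=
      hsplit (fun v => v (i, l, k) * v (j, n, k)) (fun v => v (i, k) ^ 2 * v (j, k) ^ 2)
        ((measurable_pi_apply _).mul (measurable_pi_apply _))
        (((measurable_pi_apply _).pow_const 2).mul ((measurable_pi_apply _).pow_const 2))
    rw [hs, hEII i j k]
  have hEterm4 : ∀ (i j i' j' : Fin J) (k k' : Fin D), k ≠ k' →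
      ∫ ω, ((I i l k ω * I j n k ω) * (I i' l k' ω * I j' n k' ω))
          * ((h i k ω * h j k ω) * (h i' k' ω * h j' k' ω)) ∂μ
        = ((p i l * p j n) * (p i' l * p j' n))
          * ((if i = j then 1 else 0) * (if i' = j' then 1 else 0)) := by
    intro i j i' j' k k' hkk'
    have hs : ∫ ω, ((I i l k ω * I j n k ω) * (I i' l k' ω * I j' n k' ω))
          * ((h i k ω * h j k ω) * (h i' k' ω * h j' k' ω)) ∂μ
        = (∫ ω, (I i l k ω * I j n k ω) * (I i' l k' ω * I j' n k' ω) ∂μ)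
          * ∫ ω, (h i k ω * h j k ω) * (h i' k' ω * h j' k' ω) ∂μ :=
      hsplit
        (fun v => (v (i, l, k) * v (j, n, k)) * (v (i', l, k') * v (j', n, k')))
        (fun v => (v (i, k) * v (j, k)) * (v (i', k') * v (j', k')))
        (((measurable_pi_apply ((i, l, k) : Fin J × Fin L × Fin D)).mul
            (measurable_pi_apply (j, n, k))).mul
          ((measurable_pi_apply (i', l, k')).mul (measurable_pi_apply (j', n, k'))))
        (((measurable_pi_apply ((i, k) : Fin J × Fin D)).mul
            (measurable_pi_apply (j, k))).mul
          ((measurable_pi_apply (i', k')).mul (measurable_pi_apply (j', k'))))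
    rw [hs, hEII4 i j i' j' k k' hkk', hEh4 i j i' j' k k' hkk']
  -- pointwise expansions
  have hsqsum : ∀ (l' : Fin L) (k : Fin D) (v : Fin J → ℝ) ω,
      (∑ i, I i l' k ω * v i) ^ 2 = ∑ i, I i l' k ω * v i ^ 2 := by
    intro l' k v ω
    rw [sq, Finset.sum_mul_sum]
    calc ∑ i, ∑ i', (I i l' k ω * v i) * (I i' l' k ω * v i')
        = ∑ i, ∑ i', (if i = i' then I i l' k ω * v i ^ 2 else 0) := by
          refine Finset.sum_congr rfl fun i _ => Finset.sum_congr rfl fun i' _ => ?_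
          by_cases hii : i = i'
          · subst hii
            rw [if_pos rfl, show (I i l' k ω * v i) * (I i l' k ω * v i)
                = (I i l' k ω * I i l' k ω) * (v i * v i) from by ring, hIdem]
            ring
          · rw [if_neg hii, show (I i l' k ω * v i) * (I i' l' k ω * v i')
                = (I i l' k ω * I i' l' k ω) * (v i * v i') from by ring,
              hOrtho l' k ω hii, zero_mul]
      _ = ∑ i, I i l' k ω * v i ^ 2 := by
          refine Finset.sum_congr rfl fun i _ => ?_
          simp
  have hXexp : ∀ (k : Fin D) ω, a l k ω * a n k ω
      = ∑ i, ∑ j, (I i l k ω * I j n k ω) * (h i k ω * h j k ω) := by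
    intro k ω
    rw [ha l k ω, ha n k ω, Finset.sum_mul_sum]
    exact Finset.sum_congr rfl fun i _ => Finset.sum_congr rfl fun j _ => by ring
  have hXsq : ∀ (k : Fin D) ω, (a l k ω * a n k ω) ^ 2
      = ∑ i, ∑ j, (I i l k ω * I j n k ω) * (h i k ω ^ 2 * h j k ω ^ 2) := by
    intro k ω
    have e1 := hsqsum l k (fun i => h i k ω) ω
    have e2 := hsqsum n k (fun j => h j k ω) ω
    rw [mul_pow, ha l k ω, ha n k ω, e1, e2, Finset.sum_mul_sum]
    exact Finset.sum_congr rfl fun i _ => Finset.sum_congr rfl fun j _ => by ring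
  have hXXexp : ∀ (k k' : Fin D) ω, (a l k ω * a n k ω) * (a l k' ω * a n k' ω)
      = ∑ i, ∑ j, ∑ i', ∑ j',
          ((I i l k ω * I j n k ω) * (I i' l k' ω * I j' n k' ω))
            * ((h i k ω * h j k ω) * (h i' k' ω * h j' k' ω)) := by
    intro k k' ω
    rw [hXexp k ω, hXexp k' ω, Finset.sum_mul]
    refine Finset.sum_congr rfl fun i _ => ?_
    rw [Finset.sum_mul]
    refine Finset.sum_congr rfl fun j _ => ?_
    rw [Finset.mul_sum]
    refine Finset.sum_congr rfl fun i' _ => ?_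
    rw [Finset.mul_sum]
    refine Finset.sum_congr rfl fun j' _ => ?_
    ring
  -- integrability of the correlation terms
  have hterm1int : ∀ (i j : Fin J) (k : Fin D),
      Integrable (fun ω => (I i l k ω * I j n k ω) * (h i k ω * h j k ω)) μ :=
    fun i j k => hbddmul _ _ ((hImeas i l k).mul (hImeas j n k)) (hIb2 i j k)
      (hint2 i j k k)
  have hterm2int : ∀ (i j : Fin J) (k : Fin D),
      Integrable (fun ω => (I i l k ω * I j n k ω) * (h i k ω ^ 2 * h j k ω ^ 2)) μ :=
    fun i j k => hbddmul _ _ ((hImeas i l k).mul (hImeas j n k)) (hIb2 i j k)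
      (hintsq2 i j k k)
  have hterm4int : ∀ (i j i' j' : Fin J) (k k' : Fin D),
      Integrable (fun ω => ((I i l k ω * I j n k ω) * (I i' l k' ω * I j' n k' ω))
        * ((h i k ω * h j k ω) * (h i' k' ω * h j' k' ω))) μ :=
    fun i j i' j' k k' => hbddmul _ _
      (((hImeas i l k).mul (hImeas j n k)).mul ((hImeas i' l k').mul (hImeas j' n k')))
      (hIb4 i j i' j' k k') (hint4 i j i' j' k k')
  have hintX : ∀ k, Integrable (fun ω => a l k ω * a n k ω) μ := by
    intro k
    have hi : Integrable (fun ω => ∑ i, ∑ j,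
        (I i l k ω * I j n k ω) * (h i k ω * h j k ω)) μ :=
      integrable_finset_sum _ fun i _ => integrable_finset_sum _ fun j _ => hterm1int i j k
    exact hi.congr (ae_of_all _ fun ω => (hXexp k ω).symm)
  have hintXsq : ∀ k, Integrable (fun ω => (a l k ω * a n k ω) ^ 2) μ := by
    intro k
    have hi : Integrable (fun ω => ∑ i, ∑ j,
        (I i l k ω * I j n k ω) * (h i k ω ^ 2 * h j k ω ^ 2)) μ :=
      integrable_finset_sum _ fun i _ => integrable_finset_sum _ fun j _ => hterm2int i j k
    exact hi.congr (ae_of_all _ fun ω => (hXsq k ω).symm)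
  have hintXX : ∀ k k', Integrable (fun ω =>
      (a l k ω * a n k ω) * (a l k' ω * a n k' ω)) μ := by
    intro k k'
    refine Integrable.mono'
      (g := fun ω => ((a l k ω * a n k ω) ^ 2 + (a l k' ω * a n k' ω) ^ 2) / 2)
      (((hintXsq k).add (hintXsq k')).div_const 2)
      (((hameas l k).mul (hameas n k)).mul ((hameas l k').mul (hameas n k'))).aestronglyMeasurable
      (ae_of_all _ fun ω => ?_)
    rw [Real.norm_eq_abs, abs_mul]
    nlinarith [sq_nonneg (|a l k ω * a n k ω| - |a l k' ω * a n k' ω|),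
      abs_nonneg (a l k ω * a n k ω), abs_nonneg (a l k' ω * a n k' ω),
      sq_abs (a l k ω * a n k ω), sq_abs (a l k' ω * a n k' ω)]
  -- the three expectations
  have hEX : ∀ k, ∫ ω, a l k ω * a n k ω ∂μ = ∑ j, p j l * p j n := by
    intro k
    calc ∫ ω, a l k ω * a n k ω ∂μ
        = ∫ ω, ∑ i, ∑ j, (I i l k ω * I j n k ω) * (h i k ω * h j k ω) ∂μ :=
          integral_congr_ae (ae_of_all _ (hXexp k))
      _ = ∑ i, ∫ ω, ∑ j, (I i l k ω * I j n k ω) * (h i k ω * h j k ω) ∂μ :=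
          integral_finset_sum _ fun i _ => integrable_finset_sum _ fun j _ => hterm1int i j k
      _ = ∑ i, ∑ j, ∫ ω, (I i l k ω * I j n k ω) * (h i k ω * h j k ω) ∂μ :=
          Finset.sum_congr rfl fun i _ => integral_finset_sum _ fun j _ => hterm1int i j k
      _ = ∑ i, ∑ j, (p i l * p j n) * (if i = j then 1 else 0) :=
          Finset.sum_congr rfl fun i _ => Finset.sum_congr rfl fun j _ => hEterm1 i j k
      _ = ∑ j, p j l * p j n := by
          simp [mul_ite, Finset.sum_ite_eq]
  have hEX2 : ∀ k, ∫ ω, (a l k ω * a n k ω) ^ 2 ∂μ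
      = ∑ i, ∑ j, p i l * p j n * ∫ ω, h i k ω ^ 2 * h j k ω ^ 2 ∂μ := by
    intro k
    calc ∫ ω, (a l k ω * a n k ω) ^ 2 ∂μ
        = ∫ ω, ∑ i, ∑ j, (I i l k ω * I j n k ω) * (h i k ω ^ 2 * h j k ω ^ 2) ∂μ :=
          integral_congr_ae (ae_of_all _ (hXsq k))
      _ = ∑ i, ∫ ω, ∑ j, (I i l k ω * I j n k ω) * (h i k ω ^ 2 * h j k ω ^ 2) ∂μ :=
          integral_finset_sum _ fun i _ => integrable_finset_sum _ fun j _ => hterm2int i j k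
      _ = ∑ i, ∑ j, ∫ ω, (I i l k ω * I j n k ω) * (h i k ω ^ 2 * h j k ω ^ 2) ∂μ :=
          Finset.sum_congr rfl fun i _ => integral_finset_sum _ fun j _ => hterm2int i j k
      _ = ∑ i, ∑ j, p i l * p j n * ∫ ω, h i k ω ^ 2 * h j k ω ^ 2 ∂μ :=
          Finset.sum_congr rfl fun i _ => Finset.sum_congr rfl fun j _ => hEterm2 i j k
  have hEXX : ∀ k k', k ≠ k' →
      ∫ ω, (a l k ω * a n k ω) * (a l k' ω * a n k' ω) ∂μ
        = (∑ j, p j l * p j n) ^ 2 := by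
    intro k k' hkk'
    calc ∫ ω, (a l k ω * a n k ω) * (a l k' ω * a n k' ω) ∂μ
        = ∫ ω, ∑ i, ∑ j, ∑ i', ∑ j',
            ((I i l k ω * I j n k ω) * (I i' l k' ω * I j' n k' ω))
              * ((h i k ω * h j k ω) * (h i' k' ω * h j' k' ω)) ∂μ :=
          integral_congr_ae (ae_of_all _ (hXXexp k k'))
      _ = ∑ i, ∑ j, ∑ i', ∑ j', ∫ ω,
            ((I i l k ω * I j n k ω) * (I i' l k' ω * I j' n k' ω))
              * ((h i k ω * h j k ω) * (h i' k' ω * h j' k' ω)) ∂μ := by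
          rw [integral_finset_sum _ fun i _ => integrable_finset_sum _ fun j _ =>
            integrable_finset_sum _ fun i' _ => integrable_finset_sum _ fun j' _ =>
              hterm4int i j i' j' k k']
          refine Finset.sum_congr rfl fun i _ => ?_
          rw [integral_finset_sum _ fun j _ => integrable_finset_sum _ fun i' _ =>
            integrable_finset_sum _ fun j' _ => hterm4int i j i' j' k k']
          refine Finset.sum_congr rfl fun j _ => ?_
          rw [integral_finset_sum _ fun i' _ =>
            integrable_finset_sum _ fun j' _ => hterm4int i j i' j' k k']
          refine Finset.sum_congr rfl fun i' _ => ?_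
          exact integral_finset_sum _ fun j' _ => hterm4int i j i' j' k k'
      _ = ∑ i, ∑ j, ∑ i', ∑ j', ((p i l * p j n) * (p i' l * p j' n))
            * ((if i = j then 1 else 0) * (if i' = j' then 1 else 0)) :=
          Finset.sum_congr rfl fun i _ => Finset.sum_congr rfl fun j _ =>
            Finset.sum_congr rfl fun i' _ => Finset.sum_congr rfl fun j' _ =>
              hEterm4 i j i' j' k k' hkk'
      _ = ∑ i, ∑ i', (p i l * p i n) * (p i' l * p i' n) := by
          simp [mul_ite, Finset.sum_ite_eq]
      _ = (∑ j, p j l * p j n) ^ 2 := by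
          rw [sq, Finset.sum_mul_sum]
  -- Memℒp facts
  have hmem2 : ∀ k, MemLp (fun ω => a l k ω * a n k ω) 2 μ := fun k =>
    (memLp_two_iff_integrable_sq
      (((hameas l k).mul (hameas n k)).aestronglyMeasurable)).2 (hintXsq k)
  have hmemS : MemLp (fun ω => ∑ k, a l k ω * a n k ω) 2 μ := by
    have hm : MemLp (∑ k : Fin D, fun ω => a l k ω * a n k ω) 2 μ :=
      memLp_finsetSum' _ fun k _ => hmem2 k
    have e : (fun ω => ∑ k, a l k ω * a n k ω)
        = (∑ k : Fin D, fun ω => a l k ω * a n k ω) := by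
      funext ω; simp
    rw [e]; exact hm
  have hD0 : (D : ℝ) ≠ 0 := Nat.cast_ne_zero.mpr hD.ne'
  -- mean of S
  have hES : ∫ ω, ∑ k, a l k ω * a n k ω ∂μ = (D : ℝ) * ∑ j, p j l * p j n := by
    rw [integral_finset_sum _ fun k _ => hintX k]
    simp [hEX, Finset.sum_const, Finset.card_univ, nsmul_eq_mul]
  -- second moment of S
  have hES2 : ∫ ω, (∑ k, a l k ω * a n k ω) ^ 2 ∂μ
      = (∑ k, ∑ i, ∑ j, p i l * p j n * ∫ ω, h i k ω ^ 2 * h j k ω ^ 2 ∂μ)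
        - (D : ℝ) * (∑ j, p j l * p j n) ^ 2
        + (D : ℝ) ^ 2 * (∑ j, p j l * p j n) ^ 2 := by
    have e1 : (fun ω => (∑ k, a l k ω * a n k ω) ^ 2)
        = fun ω => ∑ k, ∑ k', (a l k ω * a n k ω) * (a l k' ω * a n k' ω) := by
      funext ω
      rw [sq, Finset.sum_mul_sum]
    calc ∫ ω, (∑ k, a l k ω * a n k ω) ^ 2 ∂μ
        = ∫ ω, ∑ k, ∑ k', (a l k ω * a n k ω) * (a l k' ω * a n k' ω) ∂μ := by rw [e1]
      _ = ∑ k, ∑ k', ∫ ω, (a l k ω * a n k ω) * (a l k' ω * a n k' ω) ∂μ := by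
          rw [integral_finset_sum _ fun k _ => integrable_finset_sum _ fun k' _ => hintXX k k']
          exact Finset.sum_congr rfl fun k _ =>
            integral_finset_sum _ fun k' _ => hintXX k k'
      _ = ∑ k, ∑ k', ((if k' = k then
            ((∑ i, ∑ j, p i l * p j n * ∫ ω, h i k ω ^ 2 * h j k ω ^ 2 ∂μ)
              - (∑ j, p j l * p j n) ^ 2) else 0) + (∑ j, p j l * p j n) ^ 2) := by
          refine Finset.sum_congr rfl fun k _ => Finset.sum_congr rfl fun k' _ => ?_
          by_cases hkk : k' = k
          · subst hkk
            rw [if_pos rfl]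
            have e2 : ∫ ω, (a l k' ω * a n k' ω) * (a l k' ω * a n k' ω) ∂μ
                = ∫ ω, (a l k' ω * a n k' ω) ^ 2 ∂μ :=
              integral_congr_ae (ae_of_all _ fun ω => (sq (a l k' ω * a n k' ω)).symm)
            rw [e2, hEX2 k']
            ring
          · rw [if_neg hkk, hEXX k k' (fun hh => hkk hh.symm)]
            ring
      _ = ∑ k, (((∑ i, ∑ j, p i l * p j n * ∫ ω, h i k ω ^ 2 * h j k ω ^ 2 ∂μ)
            - (∑ j, p j l * p j n) ^ 2) + (D : ℝ) * (∑ j, p j l * p j n) ^ 2) := by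
          refine Finset.sum_congr rfl fun k _ => ?_
          rw [Finset.sum_add_distrib, Finset.sum_ite_eq' Finset.univ k]
          simp [Finset.sum_const, Finset.card_univ, nsmul_eq_mul]
      _ = (∑ k, ∑ i, ∑ j, p i l * p j n * ∫ ω, h i k ω ^ 2 * h j k ω ^ 2 ∂μ)
            - (D : ℝ) * (∑ j, p j l * p j n) ^ 2
            + (D : ℝ) ^ 2 * (∑ j, p j l * p j n) ^ 2 := by
          rw [Finset.sum_add_distrib, Finset.sum_sub_distrib]
          simp [Finset.sum_const, Finset.card_univ, nsmul_eq_mul]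
          ring
  -- variance of S
  have hVS : variance (fun ω => ∑ k, a l k ω * a n k ω) μ
      = (∑ k, ∑ i, ∑ j, p i l * p j n * ∫ ω, h i k ω ^ 2 * h j k ω ^ 2 ∂μ)
        - (D : ℝ) * (∑ j, p j l * p j n) ^ 2 := by
    rw [variance_eq_sub hmemS]
    have e3 : ((fun ω => ∑ k, a l k ω * a n k ω) ^ 2)
        = fun ω => (∑ k, a l k ω * a n k ω) ^ 2 := rfl
    rw [e3]
    rw [hES2, hES]
    ring
  -- final computation
  have efin : (fun ω => (1 / (D : ℝ)) * ∑ k, a l k ω * a n k ω)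
      = (1 / (D : ℝ)) • (fun ω => ∑ k, a l k ω * a n k ω) := rfl
  rw [efin, variance_smul, hVS]
  field_simp
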